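/- Let g = A_{5,2} be the 5-dimensional metric Lie algebra with orthonormal basis v1,…,v5 and nonzero brackets [v1,v2] = α v3 + β v4, [v1,v3] = γ v4, [v1,v4] = δ v5, with α, γ, δ > 0 and β ∈ ℝ. Then ξ = Σ ξ_i v_i is affine if and only if ξ1 = ξ2 = ξ3 = ξ4 = 0, i.e. ξ ∈ Z(g) = span{v5}. -/

import Mathlib

local notation "⟪" x ", " y "⟫" => @inner ℝ _ _ x y

/-- The underlying space `ℝ⁵`. -/
abbrev V := EuclideanSpace ℝ (Fin 5)

/-- The standard orthonormal basis; `e 0,…,e 4` play the roles of `v1,…,v5`. -/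
noncomputable def e (i : Fin 5) : V := EuclideanSpace.single i 1

lemma inner_e (u : V) (k : Fin 5) : ⟪u, e k⟫ = u k := by
  simp [e, EuclideanSpace.inner_single_right]

lemma e_apply (i k : Fin 5) : e i k = if i = k then (1:ℝ) else 0 := by
  simp [e, EuclideanSpace.single_apply, eq_comm]

lemma expand (v : V) : v = ∑ i, v i • e i := by
  ext k
  rw [WithLp.ofLp_sum, Finset.sum_apply]
  simp only [PiLp.smul_apply, e, EuclideanSpace.single_apply, smul_eq_mul,
    mul_ite, mul_one, mul_zero, Finset.sum_ite_eq, Finset.mem_univ, if_true]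

lemma vec_eq_zero (u : V) (h : ∀ z : V, ⟪u, z⟫ = 0) : u = 0 := by
  have := h u
  rwa [inner_self_eq_zero] at this

set_option maxHeartbeats 2000000 in
/-- on `A_{5,2}` (brackets `[v1,v2]=αv3+βv4`, `[v1,v3]=γv4`,
`[v1,v4]=δv5`, `α,γ,δ>0`), `ξ` is affine iff `ξ1=ξ2=ξ3=ξ4=0`,
i.e. `ξ ∈ Z(g) = span{v5}`. -/
theorem stmt_14
    (α β γ δ : ℝ) (hα : 0 < α) (hγ : 0 < γ) (hδ : 0 < δ)
    (b : V →ₗ[ℝ] V →ₗ[ℝ] V)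
    (hskew : ∀ x y, b x y = - b y x)
    (h12 : b (e 0) (e 1) = α • e 2 + β • e 3)
    (h13 : b (e 0) (e 2) = γ • e 3)
    (h14 : b (e 0) (e 3) = δ • e 4)
    (hzero : ∀ i j : Fin 5, i < j →
      (i, j) ∉ ({(0, 1), (0, 2), (0, 3)} : Set (Fin 5 × Fin 5)) → b (e i) (e j) = 0)
    (nab : V → V → V)
    (hkoszul : ∀ x y z, 2 * ⟪nab x y, z⟫ = ⟪b x y, z⟫ - ⟪b y z, x⟫ + ⟪b z x, y⟫)
    (ξ : V) :
    (∀ v w, b ξ (nab v w) - nab (b ξ v) w - nab v (b ξ w) = 0) ↔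
      (ξ 0 = 0 ∧ ξ 1 = 0 ∧ ξ 2 = 0 ∧ ξ 3 = 0) := by
  have hdiag : ∀ x, b x x = 0 := by
    intro x
    have h := hskew x x
    have h2 : (2:ℝ) • b x x = 0 := by rw [two_smul]; nth_rewrite 2 [h]; abel
    simpa using h2
  have hb00 : b (e 0) (e 0) = 0 := hdiag _
  have hb04 : b (e 0) (e 4) = 0 := hzero 0 4 (by decide) (by simp)
  have hb12 : b (e 1) (e 2) = 0 := hzero 1 2 (by decide) (by simp)
  have hb13 : b (e 1) (e 3) = 0 := hzero 1 3 (by decide) (by simp)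
  have hb14 : b (e 1) (e 4) = 0 := hzero 1 4 (by decide) (by simp)
  have hb23 : b (e 2) (e 3) = 0 := hzero 2 3 (by decide) (by simp)
  have hb24 : b (e 2) (e 4) = 0 := hzero 2 4 (by decide) (by simp)
  have hb34 : b (e 3) (e 4) = 0 := hzero 3 4 (by decide) (by simp)
  have hb11 : b (e 1) (e 1) = 0 := hdiag _
  have hb22 : b (e 2) (e 2) = 0 := hdiag _
  have hb33 : b (e 3) (e 3) = 0 := hdiag _
  have hb44 : b (e 4) (e 4) = 0 := hdiag _
  have hb10 : b (e 1) (e 0) = -(α • e 2 + β • e 3) := by rw [hskew, h12]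
  have hb20 : b (e 2) (e 0) = -(γ • e 3) := by rw [hskew, h13]
  have hb30 : b (e 3) (e 0) = -(δ • e 4) := by rw [hskew, h14]
  have hb40 : b (e 4) (e 0) = 0 := by rw [hskew, hb04, neg_zero]
  have hb21 : b (e 2) (e 1) = 0 := by rw [hskew, hb12, neg_zero]
  have hb31 : b (e 3) (e 1) = 0 := by rw [hskew, hb13, neg_zero]
  have hb41 : b (e 4) (e 1) = 0 := by rw [hskew, hb14, neg_zero]
  have hb32 : b (e 3) (e 2) = 0 := by rw [hskew, hb23, neg_zero]
  have hb42 : b (e 4) (e 2) = 0 := by rw [hskew, hb24, neg_zero]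
  have hb43 : b (e 4) (e 3) = 0 := by rw [hskew, hb34, neg_zero]
  have comp : ∀ x y (k : Fin 5),
      2 * (nab x y) k = ⟪b x y, e k⟫ - ⟪b y (e k), x⟫ + ⟪b (e k) x, y⟫ := by
    intro x y k
    rw [← inner_e (nab x y) k]
    exact hkoszul x y (e k)
  have nab_smul_left : ∀ (c : ℝ) x y, nab (c • x) y = c • nab x y := by
    intro c x y
    have h : ∀ z : V, ⟪nab (c • x) y - c • nab x y, z⟫ = 0 := by
      intro z
      have h1 := hkoszul (c • x) y z
      have h2 := hkoszul x y z
      simp only [map_smul, LinearMap.smul_apply, real_inner_smul_left,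
        real_inner_smul_right] at h1
      rw [inner_sub_left, real_inner_smul_left]
      linear_combination (h1 - c * h2) / 2
    exact sub_eq_zero.mp (vec_eq_zero _ h)
  have nab_add_left : ∀ x x' y, nab (x + x') y = nab x y + nab x' y := by
    intro x x' y
    have h : ∀ z : V, ⟪nab (x + x') y - (nab x y + nab x' y), z⟫ = 0 := by
      intro z
      have h1 := hkoszul (x + x') y z
      have h2 := hkoszul x y z
      have h3 := hkoszul x' y z
      simp only [map_add, LinearMap.add_apply, inner_add_left, inner_add_right] at h1
      rw [inner_sub_left, inner_add_left]
      linear_combination (h1 - h2 - h3) / 2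
    exact sub_eq_zero.mp (vec_eq_zero _ h)
  have nab_smul_right : ∀ (c : ℝ) x y, nab x (c • y) = c • nab x y := by
    intro c x y
    have h : ∀ z : V, ⟪nab x (c • y) - c • nab x y, z⟫ = 0 := by
      intro z
      have h1 := hkoszul x (c • y) z
      have h2 := hkoszul x y z
      simp only [map_smul, LinearMap.smul_apply, real_inner_smul_left,
        real_inner_smul_right] at h1
      rw [inner_sub_left, real_inner_smul_left]
      linear_combination (h1 - c * h2) / 2
    exact sub_eq_zero.mp (vec_eq_zero _ h)
  have nab_zero_left : ∀ y, nab 0 y = 0 := by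
    intro y
    refine vec_eq_zero _ (fun z => ?_)
    have h1 := hkoszul 0 y z
    simp only [map_zero, LinearMap.zero_apply, inner_zero_left, inner_zero_right] at h1
    linarith
  have nab_zero_right : ∀ x, nab x 0 = 0 := by
    intro x
    refine vec_eq_zero _ (fun z => ?_)
    have h1 := hkoszul x 0 z
    simp only [map_zero, LinearMap.zero_apply, inner_zero_left, inner_zero_right] at h1
    linarith
  have n34 : nab (e 3) (e 4) = (δ/2) • e 0 := by
    ext k
    fin_cases k <;> simp only [Fin.zero_eta, Fin.mk_one, Fin.reduceFinMk]
    · have h := comp (e 3) (e 4) 0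
      rw [hb34, hb40, h14] at h
      simp only [inner_zero_left, inner_zero_right, real_inner_smul_left, inner_e, e_apply, PiLp.smul_apply, PiLp.neg_apply, PiLp.add_apply, PiLp.zero_apply, Pi.zero_apply, smul_eq_mul, Fin.reduceEq, reduceIte] at h ⊢
      linarith [h]
    · have h := comp (e 3) (e 4) 1
      rw [hb34, hb41, hb13] at h
      simp only [inner_zero_left, inner_zero_right, real_inner_smul_left, inner_e, e_apply, PiLp.smul_apply, PiLp.neg_apply, PiLp.add_apply, PiLp.zero_apply, Pi.zero_apply, smul_eq_mul, Fin.reduceEq, reduceIte] at h ⊢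
      linarith [h]
    · have h := comp (e 3) (e 4) 2
      rw [hb34, hb42, hb23] at h
      simp only [inner_zero_left, inner_zero_right, real_inner_smul_left, inner_e, e_apply, PiLp.smul_apply, PiLp.neg_apply, PiLp.add_apply, PiLp.zero_apply, Pi.zero_apply, smul_eq_mul, Fin.reduceEq, reduceIte] at h ⊢
      linarith [h]
    · have h := comp (e 3) (e 4) 3
      rw [hb34, hb43, hb33] at h
      simp only [inner_zero_left, inner_zero_right, real_inner_smul_left, inner_e, e_apply, PiLp.smul_apply, PiLp.neg_apply, PiLp.add_apply, PiLp.zero_apply, Pi.zero_apply, smul_eq_mul, Fin.reduceEq, reduceIte] at h ⊢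
      linarith [h]
    · have h := comp (e 3) (e 4) 4
      rw [hb34, hb44, hb43] at h
      simp only [inner_zero_left, inner_zero_right, real_inner_smul_left, inner_e, e_apply, PiLp.smul_apply, PiLp.neg_apply, PiLp.add_apply, PiLp.zero_apply, Pi.zero_apply, smul_eq_mul, Fin.reduceEq, reduceIte] at h ⊢
      linarith [h]
  have n44 : nab (e 4) (e 4) = (0 : V) := by
    ext k
    fin_cases k <;> simp only [Fin.zero_eta, Fin.mk_one, Fin.reduceFinMk]
    · have h := comp (e 4) (e 4) 0
      rw [hb44, hb40, hb04] at h
      simp only [inner_zero_left, inner_zero_right, real_inner_smul_left, inner_e, e_apply, PiLp.smul_apply, PiLp.neg_apply, PiLp.add_apply, PiLp.zero_apply, Pi.zero_apply, smul_eq_mul, Fin.reduceEq, reduceIte] at h ⊢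
      linarith [h]
    · have h := comp (e 4) (e 4) 1
      rw [hb44, hb41, hb14] at h
      simp only [inner_zero_left, inner_zero_right, real_inner_smul_left, inner_e, e_apply, PiLp.smul_apply, PiLp.neg_apply, PiLp.add_apply, PiLp.zero_apply, Pi.zero_apply, smul_eq_mul, Fin.reduceEq, reduceIte] at h ⊢
      linarith [h]
    · have h := comp (e 4) (e 4) 2
      rw [hb44, hb42, hb24] at h
      simp only [inner_zero_left, inner_zero_right, real_inner_smul_left, inner_e, e_apply, PiLp.smul_apply, PiLp.neg_apply, PiLp.add_apply, PiLp.zero_apply, Pi.zero_apply, smul_eq_mul, Fin.reduceEq, reduceIte] at h ⊢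
      linarith [h]
    · have h := comp (e 4) (e 4) 3
      rw [hb44, hb43, hb34] at h
      simp only [inner_zero_left, inner_zero_right, real_inner_smul_left, inner_e, e_apply, PiLp.smul_apply, PiLp.neg_apply, PiLp.add_apply, PiLp.zero_apply, Pi.zero_apply, smul_eq_mul, Fin.reduceEq, reduceIte] at h ⊢
      linarith [h]
    · have h := comp (e 4) (e 4) 4
      rw [hb44] at h
      simp only [inner_zero_left, inner_zero_right, real_inner_smul_left, inner_e, e_apply, PiLp.smul_apply, PiLp.neg_apply, PiLp.add_apply, PiLp.zero_apply, Pi.zero_apply, smul_eq_mul, Fin.reduceEq, reduceIte] at h ⊢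
      linarith [h]
  have n33 : nab (e 3) (e 3) = (0 : V) := by
    ext k
    fin_cases k <;> simp only [Fin.zero_eta, Fin.mk_one, Fin.reduceFinMk]
    · have h := comp (e 3) (e 3) 0
      rw [hb33, hb30, h14] at h
      simp only [inner_zero_left, inner_zero_right, real_inner_smul_left, inner_e, e_apply, PiLp.smul_apply, PiLp.neg_apply, PiLp.add_apply, PiLp.zero_apply, Pi.zero_apply, smul_eq_mul, Fin.reduceEq, reduceIte] at h ⊢
      linarith [h]
    · have h := comp (e 3) (e 3) 1
      rw [hb33, hb31, hb13] at h
      simp only [inner_zero_left, inner_zero_right, real_inner_smul_left, inner_e, e_apply, PiLp.smul_apply, PiLp.neg_apply, PiLp.add_apply, PiLp.zero_apply, Pi.zero_apply, smul_eq_mul, Fin.reduceEq, reduceIte] at h ⊢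
      linarith [h]
    · have h := comp (e 3) (e 3) 2
      rw [hb33, hb32, hb23] at h
      simp only [inner_zero_left, inner_zero_right, real_inner_smul_left, inner_e, e_apply, PiLp.smul_apply, PiLp.neg_apply, PiLp.add_apply, PiLp.zero_apply, Pi.zero_apply, smul_eq_mul, Fin.reduceEq, reduceIte] at h ⊢
      linarith [h]
    · have h := comp (e 3) (e 3) 3
      rw [hb33] at h
      simp only [inner_zero_left, inner_zero_right, real_inner_smul_left, inner_e, e_apply, PiLp.smul_apply, PiLp.neg_apply, PiLp.add_apply, PiLp.zero_apply, Pi.zero_apply, smul_eq_mul, Fin.reduceEq, reduceIte] at h ⊢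
      linarith [h]
    · have h := comp (e 3) (e 3) 4
      rw [hb33, hb34, hb43] at h
      simp only [inner_zero_left, inner_zero_right, real_inner_smul_left, inner_e, e_apply, PiLp.smul_apply, PiLp.neg_apply, PiLp.add_apply, PiLp.zero_apply, Pi.zero_apply, smul_eq_mul, Fin.reduceEq, reduceIte] at h ⊢
      linarith [h]
  have n23 : nab (e 2) (e 3) = (γ/2) • e 0 := by
    ext k
    fin_cases k <;> simp only [Fin.zero_eta, Fin.mk_one, Fin.reduceFinMk]
    · have h := comp (e 2) (e 3) 0
      rw [hb23, hb30, h13] at h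
      simp only [inner_zero_left, inner_zero_right, real_inner_smul_left, inner_e, e_apply, PiLp.smul_apply, PiLp.neg_apply, PiLp.add_apply, PiLp.zero_apply, Pi.zero_apply, smul_eq_mul, Fin.reduceEq, reduceIte] at h ⊢
      linarith [h]
    · have h := comp (e 2) (e 3) 1
      rw [hb23, hb31, hb12] at h
      simp only [inner_zero_left, inner_zero_right, real_inner_smul_left, inner_e, e_apply, PiLp.smul_apply, PiLp.neg_apply, PiLp.add_apply, PiLp.zero_apply, Pi.zero_apply, smul_eq_mul, Fin.reduceEq, reduceIte] at h ⊢
      linarith [h]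
    · have h := comp (e 2) (e 3) 2
      rw [hb23, hb32, hb22] at h
      simp only [inner_zero_left, inner_zero_right, real_inner_smul_left, inner_e, e_apply, PiLp.smul_apply, PiLp.neg_apply, PiLp.add_apply, PiLp.zero_apply, Pi.zero_apply, smul_eq_mul, Fin.reduceEq, reduceIte] at h ⊢
      linarith [h]
    · have h := comp (e 2) (e 3) 3
      rw [hb23, hb33, hb32] at h
      simp only [inner_zero_left, inner_zero_right, real_inner_smul_left, inner_e, e_apply, PiLp.smul_apply, PiLp.neg_apply, PiLp.add_apply, PiLp.zero_apply, Pi.zero_apply, smul_eq_mul, Fin.reduceEq, reduceIte] at h ⊢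
      linarith [h]
    · have h := comp (e 2) (e 3) 4
      rw [hb23, hb34, hb42] at h
      simp only [inner_zero_left, inner_zero_right, real_inner_smul_left, inner_e, e_apply, PiLp.smul_apply, PiLp.neg_apply, PiLp.add_apply, PiLp.zero_apply, Pi.zero_apply, smul_eq_mul, Fin.reduceEq, reduceIte] at h ⊢
      linarith [h]
  have n14 : nab (e 1) (e 4) = (0 : V) := by
    ext k
    fin_cases k <;> simp only [Fin.zero_eta, Fin.mk_one, Fin.reduceFinMk]
    · have h := comp (e 1) (e 4) 0
      rw [hb14, hb40, h12] at h
      simp only [inner_zero_left, inner_zero_right, real_inner_smul_left, inner_e, e_apply, PiLp.smul_apply, PiLp.neg_apply, PiLp.add_apply, PiLp.zero_apply, Pi.zero_apply, smul_eq_mul, Fin.reduceEq, reduceIte] at h ⊢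
      linarith [h]
    · have h := comp (e 1) (e 4) 1
      rw [hb14, hb41, hb11] at h
      simp only [inner_zero_left, inner_zero_right, real_inner_smul_left, inner_e, e_apply, PiLp.smul_apply, PiLp.neg_apply, PiLp.add_apply, PiLp.zero_apply, Pi.zero_apply, smul_eq_mul, Fin.reduceEq, reduceIte] at h ⊢
      linarith [h]
    · have h := comp (e 1) (e 4) 2
      rw [hb14, hb42, hb21] at h
      simp only [inner_zero_left, inner_zero_right, real_inner_smul_left, inner_e, e_apply, PiLp.smul_apply, PiLp.neg_apply, PiLp.add_apply, PiLp.zero_apply, Pi.zero_apply, smul_eq_mul, Fin.reduceEq, reduceIte] at h ⊢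
      linarith [h]
    · have h := comp (e 1) (e 4) 3
      rw [hb14, hb43, hb31] at h
      simp only [inner_zero_left, inner_zero_right, real_inner_smul_left, inner_e, e_apply, PiLp.smul_apply, PiLp.neg_apply, PiLp.add_apply, PiLp.zero_apply, Pi.zero_apply, smul_eq_mul, Fin.reduceEq, reduceIte] at h ⊢
      linarith [h]
    · have h := comp (e 1) (e 4) 4
      rw [hb14, hb44, hb41] at h
      simp only [inner_zero_left, inner_zero_right, real_inner_smul_left, inner_e, e_apply, PiLp.smul_apply, PiLp.neg_apply, PiLp.add_apply, PiLp.zero_apply, Pi.zero_apply, smul_eq_mul, Fin.reduceEq, reduceIte] at h ⊢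
      linarith [h]
  have n13 : nab (e 1) (e 3) = (β/2) • e 0 := by
    ext k
    fin_cases k <;> simp only [Fin.zero_eta, Fin.mk_one, Fin.reduceFinMk]
    · have h := comp (e 1) (e 3) 0
      rw [hb13, hb30, h12] at h
      simp only [inner_zero_left, inner_zero_right, real_inner_smul_left, inner_e, e_apply, PiLp.smul_apply, PiLp.neg_apply, PiLp.add_apply, PiLp.zero_apply, Pi.zero_apply, smul_eq_mul, Fin.reduceEq, reduceIte] at h ⊢
      linarith [h]
    · have h := comp (e 1) (e 3) 1
      rw [hb13, hb31, hb11] at h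
      simp only [inner_zero_left, inner_zero_right, real_inner_smul_left, inner_e, e_apply, PiLp.smul_apply, PiLp.neg_apply, PiLp.add_apply, PiLp.zero_apply, Pi.zero_apply, smul_eq_mul, Fin.reduceEq, reduceIte] at h ⊢
      linarith [h]
    · have h := comp (e 1) (e 3) 2
      rw [hb13, hb32, hb21] at h
      simp only [inner_zero_left, inner_zero_right, real_inner_smul_left, inner_e, e_apply, PiLp.smul_apply, PiLp.neg_apply, PiLp.add_apply, PiLp.zero_apply, Pi.zero_apply, smul_eq_mul, Fin.reduceEq, reduceIte] at h ⊢
      linarith [h]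
    · have h := comp (e 1) (e 3) 3
      rw [hb13, hb33, hb31] at h
      simp only [inner_zero_left, inner_zero_right, real_inner_smul_left, inner_e, e_apply, PiLp.smul_apply, PiLp.neg_apply, PiLp.add_apply, PiLp.zero_apply, Pi.zero_apply, smul_eq_mul, Fin.reduceEq, reduceIte] at h ⊢
      linarith [h]
    · have h := comp (e 1) (e 3) 4
      rw [hb13, hb34, hb41] at h
      simp only [inner_zero_left, inner_zero_right, real_inner_smul_left, inner_e, e_apply, PiLp.smul_apply, PiLp.neg_apply, PiLp.add_apply, PiLp.zero_apply, Pi.zero_apply, smul_eq_mul, Fin.reduceEq, reduceIte] at h ⊢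
      linarith [h]

  have hbxi : ∀ u : V, b ξ u = ∑ i, ξ i • b (e i) u := by
    intro u
    conv_lhs => rw [expand ξ]
    simp only [map_sum, map_smul, LinearMap.sum_apply, LinearMap.smul_apply]
  have hbx0 : b ξ (e 0) =
      ξ 1 • (-(α • e 2 + β • e 3)) + ξ 2 • (-(γ • e 3)) + ξ 3 • (-(δ • e 4)) := by
    rw [hbxi (e 0), Fin.sum_univ_five, hb00, hb10, hb20, hb30, hb40]
    simp only [smul_zero]
    abel
  have hbx1 : b ξ (e 1) = ξ 0 • (α • e 2 + β • e 3) := by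
    rw [hbxi (e 1), Fin.sum_univ_five, h12, hb11, hb21, hb31, hb41]
    simp only [smul_zero]
    abel
  have hbx3 : b ξ (e 3) = ξ 0 • (δ • e 4) := by
    rw [hbxi (e 3), Fin.sum_univ_five, h14, hb13, hb23, hb33, hb43]
    simp only [smul_zero]
    abel
  have hbx4 : b ξ (e 4) = 0 := by
    rw [hbxi (e 4), Fin.sum_univ_five, hb04, hb14, hb24, hb34, hb44]
    simp only [smul_zero]
    abel
  constructor
  · intro h
    have hA := h (e 3) (e 4)
    rw [n34, hbx3, hbx4, map_smul, nab_zero_right, smul_smul, nab_smul_left, n44,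
      smul_zero, hbx0] at hA
    have comp2 := congrArg (fun u : V => u 2) hA
    have comp3 := congrArg (fun u : V => u 3) hA
    have comp4 := congrArg (fun u : V => u 4) hA
    simp only [PiLp.smul_apply, PiLp.sub_apply, PiLp.add_apply, PiLp.neg_apply,
      PiLp.zero_apply, e_apply, smul_eq_mul, Fin.reduceEq, reduceIte] at comp2 comp3 comp4
    norm_num at comp2 comp3 comp4
    have hδ' : δ ≠ 0 := ne_of_gt hδ
    have hα' : α ≠ 0 := ne_of_gt hα
    have hγ' : γ ≠ 0 := ne_of_gt hγ
    have hξ1 : ξ 1 = 0 := by tauto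
    have hξ3 : ξ 3 = 0 := by tauto
    have hξ2 : ξ 2 = 0 := by
      rcases comp3 with h' | h'
      · exact absurd h' hδ'
      · have h2' : ξ 2 * γ = 0 := by rw [hξ1] at h'; linarith
        rcases mul_eq_zero.mp h2' with h'' | h''
        · exact h''
        · exact absurd h'' hγ'
    have t1 : b ξ (e 0) = 0 := by
      rw [hbx0, hξ1, hξ2, hξ3]
      simp only [zero_smul, add_zero, zero_add]
    have hB := h (e 1) (e 3)
    rw [n13, map_smul, t1, smul_zero, hbx1, hbx3, nab_smul_left, nab_add_left,
      nab_smul_left, nab_smul_left, n23, n33, nab_smul_right, nab_smul_right, n14] at hB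
    simp only [smul_zero, add_zero, zero_sub, zero_add] at hB
    have comp0 := congrArg (fun u : V => u 0) hB
    simp only [PiLp.smul_apply, PiLp.sub_apply, PiLp.neg_apply, PiLp.zero_apply,
      e_apply, smul_eq_mul, Fin.reduceEq, reduceIte] at comp0
    norm_num at comp0
    have hξ0 : ξ 0 = 0 := by tauto
    exact ⟨hξ0, hξ1, hξ2, hξ3⟩
  · rintro ⟨h0, h1, h2, h3⟩ v w
    have hξ : ξ = ξ 4 • e 4 := by
      ext k
      fin_cases k <;> simp only [Fin.zero_eta, Fin.mk_one, Fin.reduceFinMk] <;>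
        simp [PiLp.smul_apply, e_apply, h0, h1, h2, h3]
    have hb4 : ∀ u : V, b (e 4) u = 0 := by
      intro u
      conv_lhs => rw [expand u]
      rw [map_sum, Fin.sum_univ_five]
      simp only [map_smul, hb40, hb41, hb42, hb43, hb44, smul_zero, add_zero]
    have hbz : ∀ u : V, b ξ u = 0 := by
      intro u
      rw [hξ, map_smul, LinearMap.smul_apply, hb4, smul_zero]
    rw [hbz, hbz, hbz, nab_zero_left, nab_zero_right]
    abel
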